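/- Let R = GF(2)[c]/(c³) and S = R[[d]]. For all natural numbers u ≥ 2 and v ≥ 0, setting i = 2^u(2v+1), the element (1 + c)·(1 + c + c² + d) is a unit in S and the coefficient of c² in the d^i coefficient of d^{2^u(v+1)}·(1 + c + c² + d)^{2^u(v+1)}·(1 + c)²·((1 + c)·(1 + c + c² + d))^{-1} ∈ S equals 1. -/

import Mathlib

open Polynomial PowerSeries

noncomputable section

/-- The ring `R = GF(2)[c] / (c³)`. -/
abbrev R2 : Type := AdjoinRoot (Polynomial.X ^ 3 : Polynomial (ZMod 2))

/-- The class of the variable `c` in `R = GF(2)[c] / (c³)`. -/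
def cR : R2 := AdjoinRoot.root _

/-- The power series ring `S = R[[d]]`. -/
abbrev S2 : Type := PowerSeries R2

/-- The image of `c` in `S = R[[d]]`. -/
def cS : S2 := PowerSeries.C cR

/-- The variable `d` of `S = R[[d]]`. -/
def dS : S2 := PowerSeries.X

/-- The coefficient of `c²` of an element of `R = GF(2)[c] / (c³)`,
computed via the unique representative polynomial of degree `< 3`. -/
def coefc2 (x : R2) : ZMod 2 :=
  (AdjoinRoot.modByMonicHom (Polynomial.monic_X_pow 3) x).coeff 2

/-! ### Auxiliary lemmas -/

lemma two_eq_zero_R2 : (2 : R2) = 0 := by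
  have h : ((2 : ℕ) : R2) = AdjoinRoot.of _ ((2 : ℕ) : ZMod 2) := (map_natCast _ 2).symm
  have h2 : ((2 : ℕ) : ZMod 2) = 0 := by decide
  have h3 : ((2 : ℕ) : R2) = (2 : R2) := by norm_num
  rw [← h3, h, h2, map_zero]

lemma cR_cube : cR ^ 3 = 0 := by
  have h1 : cR = AdjoinRoot.mk (Polynomial.X ^ 3 : Polynomial (ZMod 2)) Polynomial.X := rfl
  have h2 : cR ^ 3 = AdjoinRoot.mk _ ((Polynomial.X : Polynomial (ZMod 2)) ^ 3) := by
    rw [h1, map_pow]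
  rw [h2, AdjoinRoot.mk_self]

lemma eR_mul : (1 + cR) * (1 + cR + cR ^ 2) = 1 := by
  have h : (1 + cR) * (1 + cR + cR ^ 2) = 1 + 2 * cR + 2 * cR ^ 2 + cR ^ 3 := by ring
  rw [h, two_eq_zero_R2, cR_cube]; ring

lemma eR_sq : (1 + cR) ^ 2 = 1 + cR ^ 2 := by
  have h : (1 + cR) ^ 2 = 1 + 2 * cR + cR ^ 2 := by ring
  rw [h, two_eq_zero_R2]; ring

lemma eR_four : (1 + cR) ^ 4 = 1 := by
  have h : (1 + cR) ^ 4 = ((1 + cR) ^ 2) ^ 2 := by ring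
  rw [h, eR_sq]
  have h2 : (1 + cR ^ 2) ^ 2 = 1 + 2 * cR ^ 2 + cR ^ 3 * cR := by ring
  rw [h2, two_eq_zero_R2, cR_cube]; ring

lemma eR_pow_two_pow {u : ℕ} (hu : 2 ≤ u) : (1 + cR) ^ (2 ^ u) = 1 := by
  obtain ⟨w, rfl⟩ := Nat.exists_eq_add_of_le hu
  have h : (2 : ℕ) ^ (2 + w) = 4 * 2 ^ w := by rw [pow_add]; norm_num
  rw [h, pow_mul, eR_four, one_pow]

/-- Lucas-type parity: `C(2^u (v+1) - 1, 2^u v)` is odd. -/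
lemma choose_odd : ∀ u v : ℕ, ((Nat.choose (2 ^ u * (v + 1) - 1) (2 ^ u * v) : ℕ) : ZMod 2) = 1
  | 0, v => by simp
  | (u + 1), v => by
    have hB : 1 ≤ 2 ^ u * (v + 1) := Nat.one_le_iff_ne_zero.2 (by positivity)
    set B := 2 ^ u * (v + 1) with hBdef
    set K := 2 ^ u * v with hKdef
    have hn : 2 ^ (u + 1) * (v + 1) - 1 = 2 * B - 1 := by rw [hBdef, pow_succ]; ring_nf
    have hk : 2 ^ (u + 1) * v = 2 * K := by rw [hKdef, pow_succ]; ring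
    rw [hn, hk]
    have h := Choose.choose_modEq_choose_mod_mul_choose_div_nat (p := 2)
      (n := 2 * B - 1) (k := 2 * K)
    have h1 : (2 * B - 1) % 2 = 1 := by omega
    have h2 : (2 * B - 1) / 2 = B - 1 := by omega
    have h3 : (2 * K) % 2 = 0 := by omega
    have h4 : (2 * K) / 2 = K := by omega
    rw [h1, h2, h3, h4] at h
    have hc := (ZMod.natCast_eq_natCast_iff _ _ _).2 h
    rw [hc]
    push_cast
    simp only [Nat.choose_zero_right, Nat.cast_one, one_mul]
    exact choose_odd u v

/-- The geometric series `∑ (1+c)^n d^n`, inverse of `1 + (1+c) d` in characteristic 2. -/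
def Bgeo : S2 := PowerSeries.mk fun n => (1 + cR) ^ n

lemma hB_mul : (1 + PowerSeries.C (R := R2) (1 + cR) * PowerSeries.X) * Bgeo = 1 := by
  ext n
  cases n with
  | zero =>
    simp [Bgeo, add_mul, one_mul, mul_assoc]
  | succ n =>
    rw [add_mul, one_mul, mul_assoc, map_add, PowerSeries.coeff_C_mul, coeff_succ_X_mul]
    simp only [Bgeo, coeff_mk]
    have h : (1 + cR) ^ (n + 1) + (1 + cR) * (1 + cR) ^ n = 2 * (1 + cR) ^ (n + 1) := by
      ring
    rw [h, two_eq_zero_R2, zero_mul]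
    simp [PowerSeries.coeff_one]

lemma hone_cS : (1 + cS : S2) = PowerSeries.C (R := R2) (1 + cR) := by
  rw [cS, ← map_one (PowerSeries.C (R := R2)), ← map_add]

lemma hcc_cS : (1 + cS + cS ^ 2 : S2) = PowerSeries.C (R := R2) (1 + cR + cR ^ 2) := by
  rw [cS]
  simp [map_add, map_pow]

lemma hw : (1 + cS) * (1 + cS + cS ^ 2 + dS)
    = 1 + PowerSeries.C (R := R2) (1 + cR) * PowerSeries.X := by
  have h : (1 + cS) * (1 + cS + cS ^ 2 + dS)
      = (1 + cS) * (1 + cS + cS ^ 2) + (1 + cS) * dS := by ring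
  rw [h, hcc_cS, hone_cS, ← map_mul, eR_mul, map_one, dS]

lemma coefc2_final : coefc2 (1 + cR ^ 2) = 1 := by
  have h1 : (1 + cR ^ 2 : R2)
      = AdjoinRoot.mk _ (1 + Polynomial.X ^ 2 : Polynomial (ZMod 2)) := by
    rw [map_add, map_one, map_pow, AdjoinRoot.mk_X]
    rfl
  rw [coefc2, h1, AdjoinRoot.modByMonicHom_mk]
  have hdeg : (1 + Polynomial.X ^ 2 : Polynomial (ZMod 2)).degree
      < (Polynomial.X ^ 3 : Polynomial (ZMod 2)).degree := by
    rw [Polynomial.degree_X_pow]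
    refine lt_of_le_of_lt (Polynomial.degree_add_le _ _) ?_
    rw [Polynomial.degree_one, Polynomial.degree_X_pow]
    decide
  rw [(Polynomial.modByMonic_eq_self_iff (Polynomial.monic_X_pow 3)).2 hdeg]
  simp [Polynomial.coeff_one]

theorem unit_and_coefc2_case_iv (u v : ℕ) (hu : 2 ≤ u) :
    IsUnit ((1 + cS) * (1 + cS + cS ^ 2 + dS)) ∧
      coefc2 (PowerSeries.coeff (2 ^ u * (2 * v + 1))
          (dS ^ (2 ^ u * (v + 1)) * (1 + cS + cS ^ 2 + dS) ^ (2 ^ u * (v + 1)) * (1 + cS) ^ 2 *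
            Ring.inverse ((1 + cS) * (1 + cS + cS ^ 2 + dS)))) = 1 := by
  have hU : IsUnit ((1 + cS) * (1 + cS + cS ^ 2 + dS)) := by
    rw [hw]; exact IsUnit.of_mul_eq_one Bgeo hB_mul
  refine ⟨hU, ?_⟩
  set m := 2 ^ u * (v + 1) with hm
  set N := 2 ^ u * v with hN
  have hm1 : 1 ≤ m := Nat.one_le_iff_ne_zero.2 (by positivity)
  have hNm : 2 ^ u * (2 * v + 1) = N + m := by rw [hm, hN]; ring
  have hNltm : N < m := by
    rw [hm, hN]
    exact (Nat.mul_lt_mul_left (Nat.pow_pos (n := u) (by norm_num))).2 (by omega)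
  set W : S2 := 1 + PowerSeries.C (R := R2) (1 + cR) * PowerSeries.X with hW
  -- the `Ring.inverse` is the explicit geometric series
  have hinv : Ring.inverse ((1 + cS) * (1 + cS + cS ^ 2 + dS)) = Bgeo := by
    rw [hw]
    have hu1 : IsUnit W := IsUnit.of_mul_eq_one Bgeo hB_mul
    have h1 : W * Ring.inverse W = 1 := Ring.mul_inverse_cancel _ hu1
    calc Ring.inverse W = Ring.inverse W * (W * Bgeo) := by rw [hB_mul, mul_one]
      _ = (W * Ring.inverse W) * Bgeo := by ring
      _ = Bgeo := by rw [h1, one_mul]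
  -- factor `1 + c + c² + d` through `W`
  have h1cc : PowerSeries.C (R := R2) (1 + cR + cR ^ 2) * (1 + cS) = 1 := by
    rw [hone_cS, ← map_mul, mul_comm (1 + cR + cR ^ 2), eR_mul, map_one]
  have hA : (1 + cS + cS ^ 2 + dS) = PowerSeries.C (R := R2) (1 + cR + cR ^ 2) * W := by
    calc (1 + cS + cS ^ 2 + dS)
        = (PowerSeries.C (R := R2) (1 + cR + cR ^ 2) * (1 + cS)) * (1 + cS + cS ^ 2 + dS) := by
          rw [h1cc, one_mul]
      _ = PowerSeries.C (R := R2) (1 + cR + cR ^ 2) * ((1 + cS) * (1 + cS + cS ^ 2 + dS)) := by ring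
      _ = PowerSeries.C (R := R2) (1 + cR + cR ^ 2) * W := by rw [hw]
  have hccm : (1 + cR + cR ^ 2) ^ m = 1 := by
    have h1 : (1 + cR + cR ^ 2) ^ 2 ^ u = 1 := by
      calc (1 + cR + cR ^ 2) ^ 2 ^ u
          = (1 + cR + cR ^ 2) ^ 2 ^ u * (1 + cR) ^ 2 ^ u := by
            rw [eR_pow_two_pow hu, mul_one]
        _ = ((1 + cR) * (1 + cR + cR ^ 2)) ^ 2 ^ u := by rw [mul_pow]; ring
        _ = 1 := by rw [eR_mul, one_pow]
    rw [hm, pow_mul, h1, one_pow]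
  have heN : (1 + cR) ^ N = 1 := by rw [hN, pow_mul, eR_pow_two_pow hu, one_pow]
  have hm' : m - 1 + 1 = m := Nat.sub_add_cancel hm1
  have hWpow : W ^ m = W ^ (m - 1) * W := by rw [← pow_succ, hm']
  have hWm : W ^ m * Bgeo = W ^ (m - 1) := by
    rw [hWpow, mul_assoc, hB_mul, mul_one]
  have hE : dS ^ m * (1 + cS + cS ^ 2 + dS) ^ m * (1 + cS) ^ 2 *
        Ring.inverse ((1 + cS) * (1 + cS + cS ^ 2 + dS))
      = PowerSeries.C (R := R2) ((1 + cR) ^ 2) * W ^ (m - 1) * PowerSeries.X ^ m := by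
    rw [hinv, hA, mul_pow, ← map_pow, hccm, map_one, one_mul, hone_cS, ← map_pow, dS]
    calc PowerSeries.X ^ m * W ^ m * PowerSeries.C (R := R2) ((1 + cR) ^ 2) * Bgeo
        = PowerSeries.C (R := R2) ((1 + cR) ^ 2) * (W ^ m * Bgeo) * PowerSeries.X ^ m := by ring
      _ = PowerSeries.C (R := R2) ((1 + cR) ^ 2) * W ^ (m - 1) * PowerSeries.X ^ m := by rw [hWm]
  rw [hE, hNm, PowerSeries.coeff_mul_X_pow, PowerSeries.coeff_C_mul]
  -- coefficient of `d^N` in `W^(m-1)`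
  have hWcoeff : PowerSeries.coeff N (W ^ (m - 1))
      = (1 + cR) ^ N * (((m - 1).choose N : ℕ) : R2) := by
    rw [hW, add_comm (1 : S2), add_pow, map_sum, hm']
    rw [Finset.sum_eq_single N]
    · have h2 : (PowerSeries.C (R := R2) (1 + cR) * PowerSeries.X) ^ N * (1 : S2) ^ (m - 1 - N) *
          (((m - 1).choose N : ℕ) : S2)
          = PowerSeries.C (R := R2) ((1 + cR) ^ N * (((m - 1).choose N : ℕ) : R2)) *
            PowerSeries.X ^ N := by
        rw [mul_pow, ← map_pow, one_pow, mul_one, ← map_natCast (PowerSeries.C (R := R2))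
          ((m - 1).choose N), map_mul]
        ring
      rw [h2, PowerSeries.coeff_C_mul, PowerSeries.coeff_X_pow, if_pos rfl, mul_one]
    · intro b hb hbN
      have h2 : (PowerSeries.C (R := R2) (1 + cR) * PowerSeries.X) ^ b * (1 : S2) ^ (m - 1 - b) *
          (((m - 1).choose b : ℕ) : S2)
          = PowerSeries.C (R := R2) ((1 + cR) ^ b * (((m - 1).choose b : ℕ) : R2)) *
            PowerSeries.X ^ b := by
        rw [mul_pow, ← map_pow, one_pow, mul_one, ← map_natCast (PowerSeries.C (R := R2))
          ((m - 1).choose b), map_mul]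
        ring
      rw [h2, PowerSeries.coeff_C_mul, PowerSeries.coeff_X_pow, if_neg (Ne.symm hbN), mul_zero]
    · intro hNot
      exact absurd (Finset.mem_range.2 hNltm) hNot
  rw [hWcoeff, heN, one_mul]
  have hch : (((m - 1).choose N : ℕ) : R2) = 1 := by
    have h1 : (((m - 1).choose N : ℕ) : R2)
        = AdjoinRoot.of _ ((((m - 1).choose N : ℕ)) : ZMod 2) := (map_natCast _ _).symm
    rw [h1, hm, hN, choose_odd u v, map_one]
  rw [hch, mul_one, eR_sq]
  exact coefc2_final

end
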